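/- (Proposition on S-simplicial cones) Let Γ ∈ ℝ^{n×m} have linearly independent columns Γ_1,…,Γ_m and be R-sortable: there exists d ∈ {−1,+1}^m such that for every row k and distinct columns i, j, d_i d_j Γ_{ki} Γ_{kj} ≤ 0. Then the simplicial cone K = {Σ_{k=1}^m a_k d_k Γ_k : a_k ≥ 0} ⊆ Im(Γ), whose m extremal rays are spanned by the vectors d_k Γ_k (so each reaction vector is collinear with an extremal ray of K), is preserved by every associated N1C reaction system restricted to invariant stoichiometry classes: for every q ≥ 0, every x_in ∈ ℝ^n_{≥0}, every C¹ map v : ℝ^n_{≥0} → ℝ^m that is N1C relative to Γ, and every pair of solutions x, y : [0,T] → ℝ^n_{≥0} of ż = q(x_in − z) + Γ v(z), if x(0) − y(0) ∈ K then x(t) − y(t) ∈ K for all t ∈ [0,T]. -/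

import Mathlib

/-- The nonnegative orthant in `ℝ^n`. -/
def orthant (n : ℕ) : Set (Fin n → ℝ) := {x | ∀ i, 0 ≤ x i}

/-- A `C¹` reaction-rate function `v` on the nonnegative orthant is N1C relative to
the stoichiometric matrix `Γ` if, at every point of the orthant,
`Γ i j * ∂v_j/∂x_i ≤ 0` for all `i, j`, and `∂v_j/∂x_i` vanishes identically
whenever `Γ i j = 0`. -/
def IsN1C {n m : ℕ} (Γ : Matrix (Fin n) (Fin m) ℝ)
    (v : (Fin n → ℝ) → Fin m → ℝ) : Prop :=
  ContDiffOn ℝ 1 v (orthant n) ∧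
  ∀ x ∈ orthant n, ∀ (i : Fin n) (j : Fin m),
    Γ i j * fderivWithin ℝ v (orthant n) x (Pi.single i 1) j ≤ 0 ∧
    (Γ i j = 0 → fderivWithin ℝ v (orthant n) x (Pi.single i 1) j = 0)

/-- `x : [0,T] → ℝ^n` is a solution of `ż = q (x_in − z) + Γ v(z)` remaining in
the nonnegative orthant. -/
def IsSol {n m : ℕ} (Γ : Matrix (Fin n) (Fin m) ℝ) (q : ℝ) (x_in : Fin n → ℝ)
    (v : (Fin n → ℝ) → Fin m → ℝ) (T : ℝ) (x : ℝ → Fin n → ℝ) : Prop :=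
  ∀ t ∈ Set.Icc (0 : ℝ) T, x t ∈ orthant n ∧
    HasDerivWithinAt x (q • (x_in - x t) + Γ.mulVec (v (x t))) (Set.Icc (0 : ℝ) T) t

/-- The simplicial cone generated by the signed reaction vectors `d k • Γ_k`,
whose extremal rays are spanned by the vectors `d k • Γ_k`. -/
def coneOf {n m : ℕ} (Γ : Matrix (Fin n) (Fin m) ℝ) (d : Fin m → ℝ) :
    Set (Fin n → ℝ) :=
  {w | ∃ a : Fin m → ℝ, (∀ k, 0 ≤ a k) ∧ w = fun i => ∑ k, a k * d k * Γ i k}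

open Set Filter Topology

lemma uniqueDiffOn_orthant (n : ℕ) : UniqueDiffOn ℝ (orthant n) := by
  have h : orthant n = Set.pi Set.univ (fun _ : Fin n => Ici (0:ℝ)) := by
    ext x; simp only [orthant, Set.mem_pi, Set.mem_univ, forall_const, Set.mem_Ici, Set.mem_setOf_eq]
  rw [h]
  exact UniqueDiffOn.univ_pi fun i => uniqueDiffOn_Ici 0

lemma mvt_aux {g g' : ℝ → ℝ} {R : ℝ}
    (hg : ∀ s ∈ Set.Icc (0:ℝ) 1, HasDerivWithinAt g (g' s) (Set.Icc (0:ℝ) 1) s)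
    (hb : ∀ s ∈ Set.Icc (0:ℝ) 1, -R ≤ g' s) :
    g 0 - R ≤ g 1 := by
  have hmono : MonotoneOn (fun s => g s + R * s) (Set.Icc (0:ℝ) 1) := by
    apply monotoneOn_of_hasDerivWithinAt_nonneg (convex_Icc 0 1)
      (f' := fun s => g' s + R * 1)
    · intro s hs
      exact ((hg s hs).continuousWithinAt.add ((continuous_const.mul continuous_id).continuousWithinAt))
    · intro s hs
      rw [interior_Icc] at hs ⊢
      exact ((hg s (Ioo_subset_Icc_self hs)).mono Ioo_subset_Icc_self).add
        ((hasDerivWithinAt_id s _).const_mul R)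
    · intro s hs
      rw [interior_Icc] at hs
      have := hb s (Ioo_subset_Icc_self hs); linarith
  have h2 := hmono (left_mem_Icc.mpr zero_le_one) (right_mem_Icc.mpr zero_le_one) zero_le_one
  simp only [mul_zero, add_zero, mul_one] at h2
  linarith

lemma key_est {n m : ℕ} (Γ : Matrix (Fin n) (Fin m) ℝ)
    (d : Fin m → ℝ) (hd : ∀ k, d k = 1 ∨ d k = -1)
    (hsort : ∀ (k : Fin n) (i j : Fin m), i ≠ j → d i * d j * Γ k i * Γ k j ≤ 0)
    (v : (Fin n → ℝ) → Fin m → ℝ) (hv : IsN1C Γ v)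
    (p q : Fin n → ℝ) (hp : p ∈ orthant n) (hq : q ∈ orthant n)
    (a : Fin m → ℝ) (hw : ∀ i, p i - q i = ∑ j, d j * a j * Γ i j)
    (K B : ℝ) (hK : 0 ≤ K) (hB0 : 0 ≤ B) (hB : ∀ i j, |Γ i j| ≤ B)
    (hbound : ∀ s ∈ Set.Icc (0:ℝ) 1, ∀ (i : Fin n) (k' : Fin m),
      |fderivWithin ℝ v (orthant n) (q + s • (p - q)) (Pi.single i 1) k'| ≤ K)
    (k : Fin m) (δ : ℝ) (hδ : 0 ≤ δ) (ha : ∀ j, -δ ≤ a j) (hak : |a k| ≤ δ) :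
    -((m : ℝ) * ((n : ℝ) * B * K) * δ) ≤ d k * (v p k - v q k) := by
  have habs_d : ∀ j, |d j| = 1 := by
    intro j; rcases hd j with h | h <;> rw [h] <;> norm_num
  set ξ : ℝ → (Fin n → ℝ) := fun s => q + s • (p - q) with hξdef
  have hξ0 : ξ 0 = q := by simp [hξdef]
  have hξ1 : ξ 1 = p := by simp [hξdef]
  have hξmem : ∀ s ∈ Set.Icc (0:ℝ) 1, ξ s ∈ orthant n := by
    intro s hs i
    have h1 := hp i; have h2 := hq i
    simp only [hξdef, Pi.add_apply, Pi.smul_apply, Pi.sub_apply, smul_eq_mul]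
    rcases hs with ⟨h0, hle⟩; nlinarith
  have hξd : ∀ s : ℝ, HasDerivWithinAt ξ (p - q) (Set.Icc (0:ℝ) 1) s := by
    intro s
    rw [hξdef]
    simpa using ((hasDerivWithinAt_id s (Set.Icc (0:ℝ) 1)).smul_const (p - q)).const_add q
  have hdiff := hv.1.differentiableOn one_ne_zero
  set F : ℝ → (Fin n → ℝ) →L[ℝ] (Fin m → ℝ) :=
    fun s => fderivWithin ℝ v (orthant n) (ξ s) with hFdef
  set g : ℝ → ℝ := fun s => d k * v (ξ s) k with hgdef
  set g' : ℝ → ℝ := fun s => d k * (F s (p - q) k) with hg'def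
  have hgd : ∀ s ∈ Set.Icc (0:ℝ) 1, HasDerivWithinAt g (g' s) (Set.Icc (0:ℝ) 1) s := by
    intro s hs
    have h1 : HasDerivWithinAt (fun s' => v (ξ s')) (F s (p - q)) (Set.Icc (0:ℝ) 1) s :=
      ((hdiff _ (hξmem s hs)).hasFDerivWithinAt).comp_hasDerivWithinAt s (hξd s)
        (fun u hu => hξmem u hu)
    exact ((hasDerivWithinAt_pi.mp h1) k).const_mul (d k)
  have hb : ∀ s ∈ Set.Icc (0:ℝ) 1, -((m : ℝ) * ((n : ℝ) * B * K) * δ) ≤ g' s := by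
    intro s hs
    set E : Fin n → ℝ := fun i => F s (Pi.single i 1) k with hEdef
    have hEbnd : ∀ i, |E i| ≤ K := fun i => hbound s hs i k
    have hmem := hξmem s hs
    -- expansion
    have hpq : (p - q) = ∑ i, (p i - q i) • (Pi.single i 1 : Fin n → ℝ) := by
      ext i'
      rw [Finset.sum_apply]
      simp only [Pi.smul_apply, smul_eq_mul, Pi.sub_apply]
      rw [Finset.sum_eq_single i']
      · simp
      · intro b _ hb; simp [Pi.single_apply, hb.symm]
      · intro h; exact absurd (Finset.mem_univ i') h
    have hFpq : F s (p - q) k = ∑ i, (p i - q i) * E i := by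
      conv_lhs => rw [hpq]
      rw [map_sum, Finset.sum_apply]
      simp [hEdef]
    set M : Fin m → ℝ := fun j => ∑ i, d k * d j * Γ i j * E i with hMdef
    have hexp : g' s = ∑ j, a j * M j := by
      simp only [hg'def, hFpq, Finset.mul_sum]
      have h1 : ∀ i, d k * ((p i - q i) * E i) = ∑ j, a j * (d k * d j * Γ i j * E i) := by
        intro i
        rw [hw i, Finset.sum_mul, Finset.mul_sum]
        exact Finset.sum_congr rfl fun j _ => by ring
      rw [Finset.sum_congr rfl fun i _ => h1 i, Finset.sum_comm]
      simp only [hMdef, Finset.mul_sum]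
    -- signs and bounds
    have hterm_abs : ∀ j i, |d k * d j * Γ i j * E i| ≤ B * K := by
      intro j i
      rw [abs_mul, abs_mul, abs_mul, habs_d, habs_d, one_mul, one_mul]
      exact mul_le_mul (hB i j) (hEbnd i) (abs_nonneg _) hB0
    have hMub : ∀ j, M j ≤ (n : ℝ) * (B * K) := by
      intro j
      calc M j ≤ ∑ i, |d k * d j * Γ i j * E i| :=
            Finset.sum_le_sum fun i _ => le_abs_self _
        _ ≤ ∑ _i : Fin n, B * K := Finset.sum_le_sum fun i _ => hterm_abs j i
        _ = (n : ℝ) * (B * K) := by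
            rw [Finset.sum_const, Finset.card_univ, Fintype.card_fin, nsmul_eq_mul]
    have hMlb : ∀ j, -((n : ℝ) * (B * K)) ≤ M j := by
      intro j
      have : -M j ≤ (n : ℝ) * (B * K) := by
        calc -M j = ∑ i, -(d k * d j * Γ i j * E i) := by rw [hMdef]; rw [← Finset.sum_neg_distrib]
          _ ≤ ∑ i, |d k * d j * Γ i j * E i| :=
              Finset.sum_le_sum fun i _ => neg_le_abs _
          _ ≤ ∑ _i : Fin n, B * K := Finset.sum_le_sum fun i _ => hterm_abs j i
          _ = (n : ℝ) * (B * K) := by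
              rw [Finset.sum_const, Finset.card_univ, Fintype.card_fin, nsmul_eq_mul]
      linarith
    have hMpos : ∀ j, j ≠ k → 0 ≤ M j := by
      intro j hjk
      apply Finset.sum_nonneg
      intro i _
      rcases eq_or_ne (Γ i k) 0 with h0 | h0
      · have : E i = 0 := (hv.2 (ξ s) hmem i k).2 h0
        simp [this]
      · have h1 : Γ i k * E i ≤ 0 := (hv.2 (ξ s) hmem i k).1
        have h2 : d k * d j * Γ i k * Γ i j ≤ 0 := hsort i k j (Ne.symm hjk)
        have h3 : 0 ≤ (Γ i k * E i) * (d k * d j * Γ i k * Γ i j) := by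
          nlinarith [mul_nonneg (neg_nonneg.mpr h1) (neg_nonneg.mpr h2)]
        have h4 : 0 < Γ i k * Γ i k := mul_self_pos.mpr h0
        nlinarith [h3, h4]
    have hperj : ∀ j, -((n : ℝ) * (B * K) * δ) ≤ a j * M j := by
      intro j
      by_cases hjk : j = k
      · subst hjk
        have h5 : |a j * M j| ≤ δ * ((n : ℝ) * (B * K)) := by
          rw [abs_mul]
          exact mul_le_mul hak (abs_le.mpr ⟨hMlb j, hMub j⟩) (abs_nonneg _)  hδ
        have h6 := neg_abs_le (a j * M j)
        have h7 : δ * ((n : ℝ) * (B * K)) = (n : ℝ) * (B * K) * δ := by ring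
        linarith
      · have h5 : -δ * M j ≤ a j * M j :=
          mul_le_mul_of_nonneg_right (ha j) (hMpos j hjk)
        have h6 : δ * M j ≤ δ * ((n : ℝ) * (B * K)) :=
          mul_le_mul_of_nonneg_left (hMub j) hδ
        linarith
    calc -((m : ℝ) * ((n : ℝ) * B * K) * δ)
        = ∑ _j : Fin m, -((n : ℝ) * (B * K) * δ) := by
          rw [Finset.sum_const, Finset.card_univ, Fintype.card_fin, nsmul_eq_mul]; ring
      _ ≤ ∑ j, a j * M j := Finset.sum_le_sum fun j _ => hperj j
      _ = g' s := hexp.symm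
  have hfin := mvt_aux hgd hb
  have hg0 : g 0 = d k * v q k := by rw [hgdef]; simp only [hξ0]
  have hg1 : g 1 = d k * v p k := by rw [hgdef]; simp only [hξ1]
  rw [hg0, hg1] at hfin
  linarith

set_option maxHeartbeats 1000000 in
/-- **Proposition on S-simplicial cones.** Let `Γ` have linearly
independent columns and be R-sorted after signing its columns by `d : {±1}^m`.
Then the simplicial cone `K` generated by the vectors `d k • Γ_k` lies in `Im Γ`
and is preserved by every associated N1C reaction system: for any two solutions
`x, y` of `ż = q (x_in − z) + Γ v(z)` in the nonnegative orthant, if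
`x 0 − y 0 ∈ K` then `x t − y t ∈ K` for all `t ∈ [0, T]`. -/
theorem stmt8 {n m : ℕ} (Γ : Matrix (Fin n) (Fin m) ℝ)
    (hli : LinearIndependent ℝ (fun j : Fin m => fun i : Fin n => Γ i j))
    (d : Fin m → ℝ) (hd : ∀ k, d k = 1 ∨ d k = -1)
    (hsort : ∀ (k : Fin n) (i j : Fin m), i ≠ j → d i * d j * Γ k i * Γ k j ≤ 0) :
    coneOf Γ d ⊆ {w | ∃ u : Fin m → ℝ, w = Γ.mulVec u} ∧
    ∀ q : ℝ, 0 ≤ q → ∀ x_in : Fin n → ℝ, (∀ i, 0 ≤ x_in i) →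
    ∀ v : (Fin n → ℝ) → Fin m → ℝ, IsN1C Γ v →
    ∀ T : ℝ, 0 ≤ T → ∀ x y : ℝ → Fin n → ℝ,
      IsSol Γ q x_in v T x → IsSol Γ q x_in v T y →
      x 0 - y 0 ∈ coneOf Γ d →
      ∀ t ∈ Set.Icc (0 : ℝ) T, x t - y t ∈ coneOf Γ d := by
  classical
  have hd1 : ∀ j, d j * d j = 1 := by
    intro j; rcases hd j with h | h <;> rw [h] <;> norm_num
  set Γ' : Matrix (Fin n) (Fin m) ℝ := Matrix.of fun i j => d j * Γ i j with hΓ'def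
  have hΓ'app : ∀ i j, Γ' i j = d j * Γ i j := fun i j => rfl
  have hmv : ∀ (a : Fin m → ℝ) (i : Fin n),
      Γ'.mulVec a i = ∑ j, d j * a j * Γ i j := by
    intro a i
    simp only [Matrix.mulVec, dotProduct, hΓ'app]
    exact Finset.sum_congr rfl fun j _ => by ring
  constructor
  · rintro w ⟨a, ha, rfl⟩
    refine ⟨fun k => d k * a k, ?_⟩
    funext i
    simp only [Matrix.mulVec, dotProduct]
    exact Finset.sum_congr rfl fun j _ => by ring
  intro q hq x_in hx_in v hv T hT x y hsx hsy h0 t₀ ht₀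
  -- left inverse of the signed matrix
  have hker : LinearMap.ker Γ'.mulVecLin = ⊥ := by
    rw [LinearMap.ker_eq_bot']
    intro u hu
    have hli' := Fintype.linearIndependent_iff.mp hli (fun j => d j * u j)
    have hz : ∑ j, (d j * u j) • (fun i : Fin n => Γ i j) = 0 := by
      have h2 : Γ'.mulVec u = 0 := by rw [← Matrix.mulVecLin_apply]; exact hu
      funext i
      have h3 : Γ'.mulVec u i = 0 := by rw [h2]; simp
      rw [Finset.sum_apply]
      simp only [Pi.smul_apply, smul_eq_mul, Pi.zero_apply]
      rw [← h3]
      simp only [Matrix.mulVec, dotProduct, hΓ'app]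
      exact Finset.sum_congr rfl fun j _ => by ring
    have hz' := hli' hz
    funext j
    have := hz' j
    rcases hd j with h | h <;> rw [h] at this <;> simpa using this <;> linarith
  obtain ⟨L, hL⟩ := Γ'.mulVecLin.exists_leftInverse_of_injective hker
  have hLG : ∀ u : Fin m → ℝ, L (Γ'.mulVec u) = u := by
    intro u
    have := LinearMap.congr_fun hL u
    simpa [Matrix.mulVecLin_apply] using this
  -- solutions data
  have hxmem : ∀ t ∈ Set.Icc (0:ℝ) T, x t ∈ orthant n := fun t ht => (hsx t ht).1
  have hymem : ∀ t ∈ Set.Icc (0:ℝ) T, y t ∈ orthant n := fun t ht => (hsy t ht).1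
  set w : ℝ → Fin n → ℝ := fun t => x t - y t with hwdef
  set c : ℝ → Fin m → ℝ := fun t => v (x t) - v (y t) with hcdef
  have hw' : ∀ t ∈ Set.Icc (0:ℝ) T,
      HasDerivWithinAt w (-q • w t + Γ.mulVec (c t)) (Set.Icc (0:ℝ) T) t := by
    intro t ht
    have h1 := ((hsx t ht).2).sub ((hsy t ht).2)
    refine h1.congr_deriv ?_
    rw [Matrix.mulVec_sub]
    ext i
    simp only [hwdef, Pi.add_apply, Pi.sub_apply, Pi.smul_apply, Pi.neg_apply, smul_eq_mul]
    ring
  have hΓc : ∀ t, Γ.mulVec (c t) = Γ'.mulVec (fun k => d k * c t k) := by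
    intro t
    funext i
    simp only [Matrix.mulVec, dotProduct, hΓ'app]
    refine Finset.sum_congr rfl fun j _ => ?_
    rw [show d j * Γ i j * (d j * c t j) = (d j * d j) * (Γ i j * c t j) from by ring,
      hd1 j, one_mul]
  -- the projection onto the range of Γ'
  set Lc : (Fin n → ℝ) →L[ℝ] (Fin m → ℝ) := LinearMap.toContinuousLinearMap L with hLcdef
  set Gc : (Fin m → ℝ) →L[ℝ] (Fin n → ℝ) :=
    LinearMap.toContinuousLinearMap Γ'.mulVecLin with hGcdef
  have hLc : ∀ z, Lc z = L z := fun z => rfl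
  have hGc : ∀ u, Gc u = Γ'.mulVec u := fun u => rfl
  -- the function e t = exp(qt) • w t  and f t = e t - Gc (Lc (e t)) has zero derivative
  set e : ℝ → Fin n → ℝ := fun t => Real.exp (q * t) • w t with hedef
  set f : ℝ → Fin n → ℝ := fun t => e t - Gc (Lc (e t)) with hfdef
  have he' : ∀ t ∈ Set.Icc (0:ℝ) T,
      HasDerivWithinAt e (Real.exp (q * t) • (Γ.mulVec (c t))) (Set.Icc (0:ℝ) T) t := by
    intro t ht
    have hexp : HasDerivAt (fun u : ℝ => Real.exp (q * u)) (Real.exp (q * t) * (q * 1)) t :=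
      ((hasDerivAt_id t).const_mul q).exp
    have h2 := (hexp.hasDerivWithinAt).smul (hw' t ht)
    refine h2.congr_deriv ?_
    ext i
    simp only [Pi.add_apply, Pi.smul_apply, Pi.sub_apply, Pi.neg_apply, smul_eq_mul]
    ring
  have hf0 : ∀ t ∈ Set.Icc (0:ℝ) T, HasDerivWithinAt f 0 (Set.Icc (0:ℝ) T) t := by
    intro t ht
    have h2 : HasDerivWithinAt (fun t' => Gc (Lc (e t')))
        (Gc (Lc (Real.exp (q * t) • (Γ.mulVec (c t))))) (Set.Icc (0:ℝ) T) t :=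
      (Gc.comp Lc).hasFDerivAt.comp_hasDerivWithinAt t (he' t ht)
    have h3 := (he' t ht).sub h2
    have h4 : Gc (Lc (Real.exp (q * t) • (Γ.mulVec (c t))))
        = Real.exp (q * t) • (Γ.mulVec (c t)) := by
      rw [map_smul, map_smul, hΓc t]
      have h5 : Gc (Lc (Γ'.mulVec fun k => d k * c t k)) = Γ'.mulVec fun k => d k * c t k := by
        rw [hLc, hLG, hGc]
      rw [h5]
    rw [h4] at h3
    exact h3.congr_deriv (sub_self _)
  have hfcont : ContinuousOn f (Set.Icc (0:ℝ) T) :=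
    fun t ht => (hf0 t ht).continuousWithinAt
  have hfconst : ∀ t ∈ Set.Icc (0:ℝ) T, f t = f 0 := by
    apply constant_of_has_deriv_right_zero hfcont
    intro t ht
    exact (hf0 t (Set.mem_Icc_of_Ico ht)).mono_of_mem_nhdsWithin
      (Icc_mem_nhdsGE_of_mem ht)
  -- initial value
  obtain ⟨a₀, ha₀pos, ha₀⟩ := h0
  have hw0 : w 0 = Γ'.mulVec a₀ := by
    rw [hwdef]
    simp only
    rw [ha₀]
    funext i
    rw [hmv]
    exact Finset.sum_congr rfl fun j _ => by ring
  have hfz : f 0 = 0 := by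
    have he0 : e 0 = w 0 := by
      rw [hedef]; simp
    rw [hfdef]
    simp only [he0, hw0, hLc, hLG, hGc]
    simp
  -- w t stays in the range; define the coordinates a t
  set a : ℝ → Fin m → ℝ := fun t => L (w t) with hadef
  have hwa : ∀ t ∈ Set.Icc (0:ℝ) T, w t = Γ'.mulVec (a t) := by
    intro t ht
    have h2 : f t = 0 := by rw [hfconst t ht, hfz]
    have h3 : e t = Gc (Lc (e t)) := by
      have := sub_eq_zero.mp h2
      exact this
    have hne : Real.exp (q * t) ≠ 0 := (Real.exp_pos _).ne'
    have h4 : w t = (Real.exp (q * t))⁻¹ • e t := by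
      rw [hedef]; simp only [smul_smul, inv_mul_cancel₀ hne, one_smul]
    rw [h4, h3, hLc]
    rw [← map_smul, ← map_smul]
    have h5 : Gc (L ((Real.exp (q * t))⁻¹ • e t)) = Γ'.mulVec (L ((Real.exp (q * t))⁻¹ • e t)) :=
      hGc _
    rw [h5]
    congr 1
    rw [hadef]
    simp only
    rw [h4, map_smul]
  have ha0 : ∀ k, 0 ≤ a 0 k := by
    intro k
    have : a 0 = a₀ := by rw [hadef]; simp only; rw [hw0, hLG]
    rw [this]; exact ha₀pos k
  -- derivative of the coordinates
  have ha' : ∀ t ∈ Set.Icc (0:ℝ) T, ∀ k, HasDerivWithinAt (fun t' => a t' k)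
      (-q * a t k + d k * c t k) (Set.Icc (0:ℝ) T) t := by
    intro t ht k
    have h1 : HasDerivWithinAt (fun t' => Lc (w t'))
        (Lc (-q • w t + Γ.mulVec (c t))) (Set.Icc (0:ℝ) T) t :=
      Lc.hasFDerivAt.comp_hasDerivWithinAt t (hw' t ht)
    have h2 : Lc (-q • w t + Γ.mulVec (c t)) = -q • a t + (fun k => d k * c t k) := by
      rw [map_add, map_smul, hΓc t, hLc, hLc, hLG]
    rw [h2] at h1
    have h3 := hasDerivWithinAt_pi.mp h1 k
    exact h3.congr_deriv (by simp)
  have hacont : ∀ k, ContinuousOn (fun t => a t k) (Set.Icc (0:ℝ) T) :=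
    fun k t ht => (ha' t ht k).continuousWithinAt
  -- compact set of segment points, derivative bound K, matrix bound B
  have hxc : ContinuousOn x (Set.Icc (0:ℝ) T) := fun t ht => ((hsx t ht).2).continuousWithinAt
  have hyc : ContinuousOn y (Set.Icc (0:ℝ) T) := fun t ht => ((hsy t ht).2).continuousWithinAt
  set C : Set (Fin n → ℝ) :=
    (fun pr : ℝ × ℝ => y pr.1 + pr.2 • (x pr.1 - y pr.1)) ''
      ((Set.Icc (0:ℝ) T) ×ˢ (Set.Icc (0:ℝ) 1)) with hCdef
  have hCcp : IsCompact C := by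
    apply (isCompact_Icc.prod isCompact_Icc).image_of_continuousOn
    have hy1 : ContinuousOn (fun pr : ℝ × ℝ => y pr.1)
        ((Set.Icc (0:ℝ) T) ×ˢ (Set.Icc (0:ℝ) 1)) :=
      hyc.comp continuous_fst.continuousOn (fun p hp => hp.1)
    have hx1 : ContinuousOn (fun pr : ℝ × ℝ => x pr.1)
        ((Set.Icc (0:ℝ) T) ×ˢ (Set.Icc (0:ℝ) 1)) :=
      hxc.comp continuous_fst.continuousOn (fun p hp => hp.1)
    exact hy1.add (ContinuousOn.smul continuous_snd.continuousOn (hx1.sub hy1))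
  have hCsub : C ⊆ orthant n := by
    rintro _ ⟨⟨t, s⟩, ⟨ht, hs⟩, rfl⟩ i
    have h1 := hxmem t ht i
    have h2 := hymem t ht i
    simp only [Pi.add_apply, Pi.smul_apply, Pi.sub_apply, smul_eq_mul]
    rcases hs with ⟨hs0, hs1⟩
    nlinarith
  have hFcont : ContinuousOn (fun ξ => fderivWithin ℝ v (orthant n) ξ) (orthant n) :=
    hv.1.continuousOn_fderivWithin (uniqueDiffOn_orthant n) le_rfl
  obtain ⟨K₀, hK₀⟩ := hCcp.exists_bound_of_continuousOn (hFcont.mono hCsub)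
  set K : ℝ := max K₀ 0 with hKdef
  have hK : 0 ≤ K := le_max_right _ _
  have hKcomp : ∀ ξ ∈ C, ∀ (i : Fin n) (k' : Fin m),
      |fderivWithin ℝ v (orthant n) ξ (Pi.single i 1) k'| ≤ K := by
    intro ξ hξ i k'
    have h1 : |fderivWithin ℝ v (orthant n) ξ (Pi.single i 1) k'|
        ≤ ‖fderivWithin ℝ v (orthant n) ξ (Pi.single i 1)‖ := by
      rw [← Real.norm_eq_abs]
      exact norm_le_pi_norm _ k'
    have h2 : ‖fderivWithin ℝ v (orthant n) ξ (Pi.single i 1)‖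
        ≤ ‖fderivWithin ℝ v (orthant n) ξ‖ * ‖(Pi.single i 1 : Fin n → ℝ)‖ :=
      ContinuousLinearMap.le_opNorm _ _
    have h3 : ‖(Pi.single i 1 : Fin n → ℝ)‖ = 1 := by
      rw [Pi.norm_single]; exact norm_one
    have h4 := hK₀ ξ hξ
    have h5 : (0:ℝ) ≤ ‖fderivWithin ℝ v (orthant n) ξ‖ := norm_nonneg _
    calc |fderivWithin ℝ v (orthant n) ξ (Pi.single i 1) k'|
        ≤ ‖fderivWithin ℝ v (orthant n) ξ‖ * ‖(Pi.single i 1 : Fin n → ℝ)‖ := le_trans h1 h2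
      _ = ‖fderivWithin ℝ v (orthant n) ξ‖ := by rw [h3, mul_one]
      _ ≤ K₀ := h4
      _ ≤ K := le_max_left _ _
  set B : ℝ := ∑ i, ∑ j, |Γ i j| with hBdef
  have hB0 : 0 ≤ B :=
    Finset.sum_nonneg fun i _ => Finset.sum_nonneg fun j _ => abs_nonneg _
  have hB : ∀ i j, |Γ i j| ≤ B := by
    intro i j
    calc |Γ i j| ≤ ∑ j', |Γ i j'| :=
          Finset.single_le_sum (f := fun j' => |Γ i j'|)
            (fun j' _ => abs_nonneg _) (Finset.mem_univ j)
      _ ≤ B :=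
          Finset.single_le_sum
            (f := fun i => ∑ j', |Γ i j'|)
            (fun i' _ => Finset.sum_nonneg fun j' _ => abs_nonneg _) (Finset.mem_univ i)
  set Λ : ℝ := (m : ℝ) * ((n : ℝ) * B * K) + 1 with hΛdef
  have hΛ1 : (m : ℝ) * ((n : ℝ) * B * K) = Λ - 1 := by rw [hΛdef]; ring
  have hclaim : ∀ ε : ℝ, 0 < ε → ∀ t ∈ Set.Icc (0:ℝ) T, ∀ k,
      -(ε * Real.exp (Λ * t)) ≤ a t k := by
    intro ε hε
    by_contra hbad
    push_neg at hbad
    obtain ⟨tb, htb, kb, hkb⟩ := hbad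
    set hh : ℝ → Fin m → ℝ := fun u k => a u k + ε * Real.exp (Λ * u) with hhdef
    set Bad : Set ℝ := {u | u ∈ Set.Icc (0:ℝ) T ∧ ∃ k, hh u k < 0} with hBaddef
    have hBadne : Bad.Nonempty := ⟨tb, htb, kb, by simp only [hhdef]; linarith⟩
    have hbdd : BddBelow Bad := ⟨0, fun u hu => hu.1.1⟩
    set ts : ℝ := sInf Bad with htsdef
    have hts_cl : ts ∈ closure Bad := csInf_mem_closure hBadne hbdd
    have htsIcc : ts ∈ Set.Icc (0:ℝ) T :=
      (closure_minimal (fun u (hu : u ∈ Bad) => hu.1) isClosed_Icc) hts_cl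
    have hhcont : ∀ k, ContinuousOn (fun u => hh u k) (Set.Icc (0:ℝ) T) := by
      intro k
      exact (hacont k).add ((continuous_const.mul
        (Real.continuous_exp.comp (continuous_const.mul continuous_id))).continuousOn)
    have hlowB : ∀ u ∈ Bad, ts ≤ u := fun u hu => csInf_le hbdd hu
    have hh0pos : ∀ k, 0 < hh 0 k := by
      intro k
      have := ha0 k
      simp only [hhdef, mul_zero, Real.exp_zero, mul_one]
      linarith
    have htsgood : ts ∉ Bad := by
      intro hmem
      obtain ⟨k, hk⟩ := hmem.2
      rcases eq_or_lt_of_le htsIcc.1 with h0 | h0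
      · rw [← h0] at hk
        exact absurd hk (not_lt.mpr (hh0pos k).le)
      · have hcw : ContinuousWithinAt (fun u => hh u k) (Set.Icc (0:ℝ) T) ts :=
          hhcont k ts htsIcc
        have hev : ∀ᶠ u in 𝓝[Set.Icc (0:ℝ) T] ts, hh u k < 0 :=
          hcw (Iio_mem_nhds hk)
        have hmono : 𝓝[Set.Ico (0:ℝ) ts] ts ≤ 𝓝[Set.Icc (0:ℝ) T] ts :=
          nhdsWithin_mono _ (fun u hu => ⟨hu.1, le_trans hu.2.le htsIcc.2⟩)
        have hne2 : (𝓝[Set.Ico (0:ℝ) ts] ts).NeBot := by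
          apply mem_closure_iff_nhdsWithin_neBot.mp
          rw [closure_Ico h0.ne]
          exact ⟨htsIcc.1, le_rfl⟩
        have hexu := ((hev.filter_mono hmono).and eventually_mem_nhdsWithin).exists
        obtain ⟨u, hu1, hu2⟩ := hexu
        have : u ∈ Bad := ⟨⟨hu2.1, le_trans hu2.2.le htsIcc.2⟩, k, hu1⟩
        exact absurd (hlowB u this) (not_le.mpr hu2.2)
    have hUnion : Bad = ⋃ k, {u | u ∈ Set.Icc (0:ℝ) T ∧ hh u k < 0} := by
      ext u
      simp only [hBaddef, Set.mem_setOf_eq, Set.mem_iUnion]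
      tauto
    have hts_cl2 : ts ∈ ⋃ k, closure {u | u ∈ Set.Icc (0:ℝ) T ∧ hh u k < 0} := by
      rw [← closure_iUnion_of_finite, ← hUnion]
      exact hts_cl
    obtain ⟨k, hkcl⟩ := Set.mem_iUnion.mp hts_cl2
    set Bk : Set ℝ := {u | u ∈ Set.Icc (0:ℝ) T ∧ hh u k < 0} with hBkdef
    have hBsub : Bk ⊆ Bad := fun u hu => ⟨hu.1, k, hu.2⟩
    have htsnot : ts ∉ Bk := fun hmem => htsgood (hBsub hmem)
    have hnb : (𝓝[Bk] ts).NeBot := mem_closure_iff_nhdsWithin_neBot.mp hkcl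
    have hgood : ∀ j, 0 ≤ hh ts j := by
      intro j
      by_contra hcon
      exact htsgood ⟨htsIcc, j, not_le.mp hcon⟩
    have hzero : hh ts k = 0 := by
      refine le_antisymm ?_ (hgood k)
      have htd : Filter.Tendsto (fun u => hh u k) (𝓝[Bk] ts) (𝓝 (hh ts k)) :=
        (hhcont k ts htsIcc).mono_left (nhdsWithin_mono _ (fun u hu => hu.1))
      exact le_of_tendsto htd (eventually_mem_nhdsWithin.mono (fun u hu => hu.2.le))
    set δ : ℝ := ε * Real.exp (Λ * ts) with hδdef
    have hδpos : 0 < δ := mul_pos hε (Real.exp_pos _)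
    have hak : a ts k = -δ := by
      have h2 := hzero
      simp only [hhdef] at h2
      rw [hδdef]
      linarith
    have halow : ∀ j, -δ ≤ a ts j := by
      intro j
      have h2 := hgood j
      simp only [hhdef] at h2
      rw [hδdef]
      linarith
    have hwts : ∀ i, x ts i - y ts i = ∑ j, d j * a ts j * Γ i j := by
      intro i
      have h2 := congrFun (hwa ts htsIcc) i
      simp only [hwdef, Pi.sub_apply] at h2
      rw [h2, hmv]
    have hbound2 : ∀ s ∈ Set.Icc (0:ℝ) 1, ∀ (i : Fin n) (k' : Fin m),
        |fderivWithin ℝ v (orthant n) (y ts + s • (x ts - y ts)) (Pi.single i 1) k'| ≤ K := by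
      intro s hs i k'
      exact hKcomp _ ⟨(ts, s), ⟨htsIcc, hs⟩, rfl⟩ i k'
    have hest := key_est Γ d hd hsort v hv (x ts) (y ts) (hxmem ts htsIcc) (hymem ts htsIcc)
      (a ts) hwts K B hK hB0 hB hbound2 k δ hδpos.le halow
      (by rw [hak, abs_neg, abs_of_nonneg hδpos.le])
    have hckts : c ts k = v (x ts) k - v (y ts) k := rfl
    set D : ℝ := (-q * a ts k + d k * c ts k) + ε * (Real.exp (Λ * ts) * (Λ * 1)) with hDdef
    have hDpos : 0 < D := by
      have h7 : (m:ℝ) * ((n:ℝ) * B * K) * δ = (Λ - 1) * δ := by rw [hΛ1]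
      rw [h7] at hest
      have h8 : 0 ≤ q * δ := mul_nonneg hq hδpos.le
      have h9 : ε * (Real.exp (Λ * ts) * (Λ * 1)) = Λ * δ := by rw [hδdef]; ring
      rw [hDdef, hak, hckts, h9]
      nlinarith [hest, h8, hδpos]
    have hHd : HasDerivWithinAt (fun u => hh u k) D (Set.Icc (0:ℝ) T) ts := by
      have h1 := ha' ts htsIcc k
      have h2 : HasDerivAt (fun u : ℝ => ε * Real.exp (Λ * u))
          (ε * (Real.exp (Λ * ts) * (Λ * 1))) ts :=
        (((hasDerivAt_id ts).const_mul Λ).exp).const_mul ε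
      rw [hDdef, hckts]
      exact h1.add h2.hasDerivWithinAt
    have hsub2 : Bk ⊆ Set.Icc (0:ℝ) T \ {ts} := by
      intro u hu
      refine ⟨hu.1, fun he => htsnot ?_⟩
      rw [Set.mem_singleton_iff] at he
      rwa [he] at hu
    have htend : Filter.Tendsto (slope (fun u => hh u k) ts) (𝓝[Bk] ts) (𝓝 D) :=
      (hasDerivWithinAt_iff_tendsto_slope.mp hHd).mono_left (nhdsWithin_mono _ hsub2)
    have hev1 : ∀ᶠ u in 𝓝[Bk] ts, 0 < slope (fun u => hh u k) ts u :=
      htend.eventually (eventually_gt_nhds hDpos)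
    have hev2 : ∀ᶠ u in 𝓝[Bk] ts, slope (fun u => hh u k) ts u < 0 := by
      refine eventually_mem_nhdsWithin.mono (fun u hu => ?_)
      have h1 : hh u k < 0 := hu.2
      have h2 : ts < u :=
        lt_of_le_of_ne (hlowB u (hBsub hu)) (fun he => htsnot (he ▸ hu))
      rw [slope_def_field, hzero]
      apply div_neg_of_neg_of_pos
      · linarith
      · linarith
    obtain ⟨u, hu1, hu2⟩ := (hev1.and hev2).exists
    exact absurd (lt_trans hu1 hu2) (lt_irrefl 0)
  -- conclusion
  have hnonneg : ∀ k, 0 ≤ a t₀ k := by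
    intro k
    by_contra hcon
    push_neg at hcon
    have hepos : 0 < (-a t₀ k) / (2 * Real.exp (Λ * t₀)) := by
      apply div_pos (by linarith) (by positivity)
    have h2 := hclaim _ hepos t₀ ht₀ k
    have hne : Real.exp (Λ * t₀) ≠ 0 := (Real.exp_pos _).ne'
    have heq : (-a t₀ k) / (2 * Real.exp (Λ * t₀)) * Real.exp (Λ * t₀) = -a t₀ k / 2 := by
      field_simp
    rw [heq] at h2
    linarith
  refine ⟨a t₀, hnonneg, ?_⟩
  have h2 : x t₀ - y t₀ = w t₀ := rfl
  rw [h2, hwa t₀ ht₀]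
  funext i
  rw [hmv]
  exact Finset.sum_congr rfl fun j _ => by ring
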